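/- Let x : E → ℝ satisfy ∑_{e∈F} x(e) ≤ f(F) for every F ⊆ E. Then the scaled vector (1−γ)·x satisfies ∑_{e∈F} (1−γ)·x(e) ≤ f̃(F) for every F ⊆ E. That is, scaling the polytope defined by the constraints with right-hand sides f by a factor (1−γ) gives a subset of the polytope defined by the constraints with right-hand sides f̃. -/

import Mathlib

lemma prod_convex_aux {α : Type*} (γ : ℝ) (hγ0 : 0 ≤ γ) (hγ1 : γ ≤ 1)
    (a : α → ℝ) :
    ∀ F : Finset α, (∀ e ∈ F, 0 ≤ a e ∧ a e ≤ 1) →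
      ∏ e ∈ F, (γ + (1 - γ) * a e) ≤ γ + (1 - γ) * ∏ e ∈ F, a e := by
  classical
  intro F
  induction F using Finset.induction_on with
  | empty => simp
  | insert b s hnotmem ih =>
    intro h
    have hb := h b (Finset.mem_insert_self b s)
    have hs : ∀ e ∈ s, 0 ≤ a e ∧ a e ≤ 1 := fun e he => h e (Finset.mem_insert_of_mem he)
    rw [Finset.prod_insert hnotmem, Finset.prod_insert hnotmem]
    have hQ0 : 0 ≤ ∏ e ∈ s, a e := Finset.prod_nonneg fun e he => (hs e he).1
    have hQ1 : ∏ e ∈ s, a e ≤ 1 := Finset.prod_le_one (fun e he => (hs e he).1) (fun e he => (hs e he).2)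
    set Q := ∏ e ∈ s, a e
    have hfac : 0 ≤ γ + (1 - γ) * a b := by nlinarith [hb.1, hb.2]
    calc (γ + (1 - γ) * a b) * ∏ e ∈ s, (γ + (1 - γ) * a e)
        ≤ (γ + (1 - γ) * a b) * (γ + (1 - γ) * Q) := by
          exact mul_le_mul_of_nonneg_left (ih hs) hfac
      _ ≤ γ + (1 - γ) * (a b * Q) := by nlinarith [mul_nonneg (mul_nonneg (mul_nonneg hγ0 (by linarith : (0:ℝ) ≤ 1 - γ)) (by linarith [hb.2] : (0:ℝ) ≤ 1 - a b)) (by linarith : (0:ℝ) ≤ 1 - Q)]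

theorem scaled_point_in_scaled_polytope
    {α : Type*} (E : Finset α) (p : α → ℝ)
    (hp : ∀ e ∈ E, 0 ≤ p e ∧ p e ≤ 1)
    (γ : ℝ) (hγ : 0 ≤ γ ∧ γ ≤ 1)
    (x : α → ℝ)
    (hx : ∀ F ⊆ E, ∑ e ∈ F, x e ≤ 1 - ∏ e ∈ F, (1 - p e)) :
    ∀ F ⊆ E, ∑ e ∈ F, (1 - γ) * x e ≤ 1 - ∏ e ∈ F, (1 - (1 - γ) * p e) := by
  intro F hF
  have ha : ∀ e ∈ F, 0 ≤ 1 - p e ∧ 1 - p e ≤ 1 := by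
    intro e he
    have := hp e (hF he)
    constructor <;> linarith [this.1, this.2]
  have key := prod_convex_aux γ hγ.1 hγ.2 (fun e => 1 - p e) F ha
  have heq : ∏ e ∈ F, (1 - (1 - γ) * p e) = ∏ e ∈ F, (γ + (1 - γ) * (1 - p e)) := by
    apply Finset.prod_congr rfl; intro e _; ring
  rw [← Finset.mul_sum, heq]
  have h1 := hx F hF
  nlinarith [key, h1, hγ.1, hγ.2]
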